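/- Let a be a weak composition and k a positive integer. If (c, r) and (c, s) are both k-addable cells for a with r < s, then a_r > a_s, and the weak compositions supp_a^{(c,r)} + e_r and supp_a^{(c,s)} + e_s are incomparable in left swap order (neither is ⪯ the other). -/

import Mathlib

attribute [local instance] Classical.propDecidable

/-- A diagram: a set of cells `(column, row)` with positive coordinates. -/
abbrev Diagram : Type := Set (ℕ × ℕ)

/-- The key diagram of a weak composition `a` (parts indexed from 1). -/
def keyDiagram (a : ℕ → ℕ) : Diagram := {p | 1 ≤ p.1 ∧ 1 ≤ p.2 ∧ p.1 ≤ a p.2}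

/-- A single Kohnert move: the rightmost cell of some row drops within its column to
the first unoccupied position below it. -/
def KohnertMove (T S : Diagram) : Prop :=
  ∃ c r r', (c, r) ∈ T ∧ (∀ c', (c', r) ∈ T → c' ≤ c) ∧
    1 ≤ r' ∧ r' < r ∧ (c, r') ∉ T ∧ (∀ s, r' < s → s < r → (c, s) ∈ T) ∧
    S = insert (c, r') (T \ {(c, r)})

/-- The set of Kohnert diagrams of a weak composition. -/
def KD (a : ℕ → ℕ) : Set Diagram :=
  {T | Relation.ReflTransGen KohnertMove (keyDiagram a) T}

/-- Row weight: the number of cells in each row. -/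
noncomputable def rowWeight (T : Diagram) : ℕ → ℕ :=
  fun r => {p : ℕ × ℕ | p ∈ T ∧ p.2 = r}.ncard

/-- Column weight: the number of cells in each column. -/
noncomputable def colWeight (T : Diagram) : ℕ → ℕ :=
  fun c => {p : ℕ × ℕ | p ∈ T ∧ p.1 = c}.ncard

/-- The weak composition with a single part `1` in position `j`. -/
def eComp (j : ℕ) : ℕ → ℕ := fun i => if i = j then 1 else 0

/-- Exchange parts `i` and `j` of a weak composition. -/
def swapParts (a : ℕ → ℕ) (i j : ℕ) : ℕ → ℕ :=
  fun t => if t = i then a j else if t = j then a i else a t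

/-- A single left swap: exchange two parts `a i < a j` with `i < j`. -/
def LSwapStep (a b : ℕ → ℕ) : Prop :=
  ∃ i j, 1 ≤ i ∧ i < j ∧ a i < a j ∧ b = swapParts a i j

/-- Left swap order: `b ⪯ a`. -/
def LswapLE (b a : ℕ → ℕ) : Prop := Relation.ReflTransGen LSwapStep a b

/-- A generic Kohnert diagram: a Kohnert diagram of some weak composition. -/
def GenericKD (T : Diagram) : Prop :=
  ∃ a : ℕ → ℕ, (∃ n, ∀ i, n < i → a i = 0) ∧ T ∈ KD a

/-- The target space `D(a,k)`: union of `KD (b + e j)` over `b ⪯ a` and `1 ≤ j ≤ k`. -/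
def Dset (a : ℕ → ℕ) (k : ℕ) : Set Diagram :=
  {T | ∃ b j, LswapLE b a ∧ 1 ≤ j ∧ j ≤ k ∧ T ∈ KD (b + eComp j)}

/-- `(c,r)` is an addable cell for `a`. -/
def Addable (a : ℕ → ℕ) (c r : ℕ) : Prop :=
  1 ≤ c ∧ 1 ≤ r ∧ a r < c ∧ ∃ s, r ≤ s ∧ a s = c - 1

/-- `(c,r)` is a `k`-addable cell for `a`. -/
def KAddable (a : ℕ → ℕ) (k c r : ℕ) : Prop :=
  1 ≤ c ∧ 1 ≤ r ∧ r ≤ k ∧ a r < c ∧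
    (a r < c - 1 → ∃ l, k < l ∧ a l = c - 1) ∧
    (∀ i, r < i → i ≤ k → a i < a r ∨ c ≤ a i)

/-- Apply the transpositions `t_{r0,r1} t_{r1,r2} ⋯` (rightmost first) to `a`. -/
def applyTranspositions (a : ℕ → ℕ) : List ℕ → (ℕ → ℕ)
  | [] => a
  | [_] => a
  | r0 :: r1 :: rest => swapParts (applyTranspositions a (r1 :: rest)) r0 r1

/-- The increasing chain of row indices `r = r₀ < r₁ < ⋯ < r_q` used to construct
the maximal support composition for `a` at `(c,r)`: at each step, the next index is
the first position carrying the smallest part exceeding the current one and at most `c-1`. -/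
noncomputable def suppChain (a : ℕ → ℕ) (c : ℕ) : ℕ → ℕ → List ℕ
  | 0, r => [r]
  | fuel + 1, r =>
    if (∃ s, r < s ∧ a r < a s ∧ a s ≤ c - 1) then
      r :: suppChain a c fuel (sInf {s | r < s ∧ a r < a s ∧ a s ≤ c - 1})
    else [r]

/-- The maximal support composition for `a` at `(c,r)`. -/
noncomputable def suppComp (a : ℕ → ℕ) (c r : ℕ) : ℕ → ℕ :=
  applyTranspositions a (suppChain a c c r)

/-- The maximal drop composition for `a` in column `c` at the set of rows `R`. -/
noncomputable def dropComp (a : ℕ → ℕ) (c : ℕ) (R : Finset ℕ) : ℕ → ℕ :=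
  applyTranspositions (suppComp a c (sSup (R : Set ℕ))) (R.sort (· ≤ ·))

/-- The key polynomial of a weak composition. -/
noncomputable def keyPoly (a : ℕ → ℕ) : MvPolynomial ℕ ℤ :=
  ∑ᶠ T ∈ KD a, ∏ᶠ i : ℕ, (MvPolynomial.X i : MvPolynomial ℕ ℤ) ^ rowWeight T i

/-- A matching sequence on a diagram `T`: edges `(x, y)` mean `x` (in column `i+1`)
matches to `y` (in column `i`, weakly higher row); every cell outside column 1 is matched,
sources and targets are unique. -/
def IsMatchingSeq (T : Diagram) (M : Set ((ℕ × ℕ) × (ℕ × ℕ))) : Prop :=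
  (∀ p ∈ M, p.1 ∈ T ∧ p.2 ∈ T ∧ 2 ≤ p.1.1 ∧ p.2.1 + 1 = p.1.1 ∧ p.1.2 ≤ p.2.2) ∧
  (∀ x y y' : ℕ × ℕ, (x, y) ∈ M → (x, y') ∈ M → y = y') ∧
  (∀ x x' y : ℕ × ℕ, (x, y) ∈ M → (x', y) ∈ M → x = x') ∧
  (∀ x ∈ T, 2 ≤ x.1 → ∃ y, (x, y) ∈ M)

/-- The anchor weight of a matching sequence: its `i`-th part is the number of cells
on the path of `M` terminating at the column-1 cell in row `i`. -/
noncomputable def anchorWeight (T : Diagram) (M : Set ((ℕ × ℕ) × (ℕ × ℕ))) : ℕ → ℕ :=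
  fun i =>
    {x : ℕ × ℕ | x ∈ T ∧ Relation.ReflTransGen (fun u v => (u, v) ∈ M) x (1, i)}.ncard

/-- `m_T(c,r)`. -/
noncomputable def mval (T : Diagram) (c r : ℕ) : ℤ :=
  ({p : ℕ × ℕ | p ∈ T ∧ p.1 = c - 1 ∧ r ≤ p.2}.ncard : ℤ) -
    ({p : ℕ × ℕ | p ∈ T ∧ p.1 = c ∧ r ≤ p.2}.ncard : ℤ)

/-- One rectification step. -/
noncomputable def rho (T : Diagram) : Diagram :=
  if ∀ c r, 1 < c → 1 ≤ r → 0 ≤ mval T c r then T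
  else
    let c := sInf {c | 1 < c ∧ ∃ r, 1 ≤ r ∧ mval T c r < 0}
    let r := sSup {r | 1 ≤ r ∧ ∀ r', 1 ≤ r' → mval T c r ≤ mval T c r'}
    insert (c - 1, r) (T \ {(c, r)})

/-- Rectification: iterate `rho` until it stabilizes. -/
noncomputable def rectify (T : Diagram) : Diagram :=
  if h : ∃ m, rho^[m + 1] T = rho^[m] T then rho^[h.choose] T else T

/-- Bottom insertion `Δ₁`: add a cell at the leftmost empty position of row 1. -/
noncomputable def bottomInsert (T : Diagram) : Diagram :=
  insert (sInf {i | 1 ≤ i ∧ (i, 1) ∉ T}, 1) T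

/-- Top insertion `Δ∞`: add a cell in row `j` beyond the last occupied column
and rectify. -/
noncomputable def topInsert (T : Diagram) (j : ℕ) : Diagram :=
  rectify (insert (sSup {c | ∃ r, (c, r) ∈ T} + 1, j) T)

/-- `x` is a removable cell of `T`. -/
def Removable (T : Diagram) (x : ℕ × ℕ) : Prop := x ∈ T ∧ GenericKD (T \ {x})

/-- A weak Kohnert diagram: a diagram with a removable cell. -/
def WeakKD (T : Diagram) : Prop := ∃ x, Removable T x

/-- `c` is a removable column of `T`. -/
def IsRemovableCol (T : Diagram) (c : ℕ) : Prop := ∃ x, Removable T x ∧ x.1 = c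

/-- The cells of the thread of `S` starting at the cell in column `j` and row `r`. -/
noncomputable def threadCells (S : Diagram) : ℕ → ℕ → Diagram
  | 0, _ => ∅
  | j + 1, r =>
    insert (j + 1, r)
      (if (∃ s, r ≤ s ∧ (j, s) ∈ S) then
        threadCells S j (sInf {s | r ≤ s ∧ (j, s) ∈ S})
      else ∅)

/-- Extract the first thread of `S`: start at the lowest cell of the rightmost column. -/
noncomputable def extractThread (S : Diagram) : Diagram :=
  threadCells S (sSup {c | ∃ r, (c, r) ∈ S})
    (sInf {r | (sSup {c | ∃ r', (c, r') ∈ S}, r) ∈ S})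

/-- The list of threads of the thread decomposition (with fuel). -/
noncomputable def threadList : ℕ → Diagram → List Diagram
  | 0, _ => []
  | fuel + 1, S =>
    if S = ∅ then [] else extractThread S :: threadList fuel (S \ extractThread S)

/-- The thread weight `θ(T)`: its `i`-th part is the number of cells of the thread
whose column-1 cell lies in row `i`. -/
noncomputable def threadWeight (T : Diagram) : ℕ → ℕ :=
  fun i => ∑ᶠ th ∈ {th : Diagram | th ∈ threadList T.ncard T ∧ (1, i) ∈ th}, th.ncard

/-- The target space `D^(m)(a,k)`. -/
def DsetM (a : ℕ → ℕ) (k m : ℕ) : Set Diagram :=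
  {T | ∃ (bs : ℕ → ℕ → ℕ) (js : ℕ → ℕ),
      LswapLE (bs 0) a ∧
      (∀ i, 1 ≤ i → i ≤ m → 1 ≤ js i ∧ js i ≤ k ∧
        LswapLE (bs i) (bs (i - 1) + eComp (js i))) ∧
      (∀ i i', 1 ≤ i → i < i' → i' ≤ m → bs i (js i) ≠ bs i' (js i')) ∧
      T ∈ KD (bs m)}

/-- The sum of all monomials of degree `m` in `x_1, …, x_k`. -/
noncomputable def hPoly (k m : ℕ) : MvPolynomial ℕ ℤ :=
  ∑ s ∈ (Finset.Icc 1 k).sym m, (Multiset.map MvPolynomial.X s.val).prod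

/-- Semistandard Young tableaux of shape `lam` with entries in `{1, …, n}`,
encoded as `f row col = entry` (0 outside the shape, rows/columns indexed from 1). -/
def IsSSYT (n : ℕ) (lam : ℕ → ℕ) (f : ℕ → ℕ → ℕ) : Prop :=
  (∀ i c, f i c ≠ 0 ↔ (1 ≤ i ∧ 1 ≤ c ∧ c ≤ lam i)) ∧
  (∀ i c, f i c ≤ n) ∧
  (∀ i c, 1 ≤ i → 1 ≤ c → c + 1 ≤ lam i → f i c ≤ f i (c + 1)) ∧
  (∀ i c, 1 ≤ i → 1 ≤ c → c ≤ lam (i + 1) → f i c < f (i + 1) c)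

/-- The column of row `i` at which `x` is inserted by RSK row insertion. -/
noncomputable def bumpCol (f : ℕ → ℕ → ℕ) (i x : ℕ) : ℕ :=
  sInf {c | 1 ≤ c ∧ (f i c = 0 ∨ x < f i c)}

/-- RSK row insertion, with fuel. -/
noncomputable def rskAux : ℕ → (ℕ → ℕ → ℕ) → ℕ → ℕ → (ℕ → ℕ → ℕ)
  | 0, f, _, _ => f
  | fuel + 1, f, i, x =>
    let c := bumpCol f i x
    let y := f i c
    let f' : ℕ → ℕ → ℕ := fun i' c' => if i' = i ∧ c' = c then x else f i' c'
    if y = 0 then f' else rskAux fuel f' (i + 1) y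

/-- RSK row insertion of the entry `x` into a tableau with entries at most `n`. -/
noncomputable def RSKinsert (n : ℕ) (f : ℕ → ℕ → ℕ) (x : ℕ) : ℕ → ℕ → ℕ :=
  rskAux (n + 1) f 1 x

/-- The map `𝔻`: the tableau cell in column `c` with entry `v` becomes the diagram
cell `(c, n + 1 - v)`. -/
def toDiagram (n : ℕ) (f : ℕ → ℕ → ℕ) : Diagram :=
  {p | ∃ i, 1 ≤ i ∧ f i p.1 ≠ 0 ∧ p.2 + f i p.1 = n + 1}

section Statement5Aux

lemma swapParts_eq_swap (a : ℕ → ℕ) (i j m : ℕ) :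
    swapParts a i j m = a (Equiv.swap i j m) := by
  simp only [swapParts, Equiv.swap_apply_def]
  split_ifs <;> rfl

lemma applyTrans_not_mem (a : ℕ → ℕ) : ∀ (L : List ℕ) (i : ℕ), i ∉ L →
    applyTranspositions a L i = a i := by
  intro L
  induction L with
  | nil => intro i _; rfl
  | cons x L ih =>
    intro i hi
    cases L with
    | nil => rfl
    | cons y rest =>
      simp only [List.mem_cons, not_or] at hi
      show swapParts (applyTranspositions a (y :: rest)) x y i = a i
      rw [swapParts]
      simp only [if_neg hi.1, if_neg hi.2.1]
      exact ih i (by simp only [List.mem_cons, not_or]; exact hi.2)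

lemma applyTrans_cons_head (a : ℕ → ℕ) : ∀ (L : List ℕ) (r m : ℕ),
    (r :: L).getLast? = some m → applyTranspositions a (r :: L) r = a m := by
  intro L
  induction L with
  | nil =>
    intro r m hm
    simp only [List.getLast?_singleton, Option.some.injEq] at hm
    subst hm; rfl
  | cons y rest ih =>
    intro r m hm
    rw [List.getLast?_cons_cons] at hm
    show swapParts (applyTranspositions a (y :: rest)) r y r = a m
    rw [swapParts]
    simp only [if_pos rfl]
    exact ih y m hm

lemma suppChain_zero (a : ℕ → ℕ) (c r : ℕ) : suppChain a c 0 r = [r] := by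
  rw [suppChain]

lemma suppChain_succ (a : ℕ → ℕ) (c fal r : ℕ) :
    suppChain a c (fal + 1) r =
      if (∃ s, r < s ∧ a r < a s ∧ a s ≤ c - 1) then
        r :: suppChain a c fal (sInf {s | r < s ∧ a r < a s ∧ a s ≤ c - 1})
      else [r] := by
  rw [suppChain]

lemma suppChain_cons (a : ℕ → ℕ) (c fal r : ℕ) :
    ∃ L, suppChain a c fal r = r :: L := by
  cases fal with
  | zero => exact ⟨[], suppChain_zero a c r⟩
  | succ f =>
    rw [suppChain_succ]
    split
    · exact ⟨_, rfl⟩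
    · exact ⟨[], rfl⟩

lemma suppChain_mem_ge (a : ℕ → ℕ) (c : ℕ) :
    ∀ fal r m, m ∈ suppChain a c fal r → r ≤ m := by
  intro fal
  induction fal with
  | zero =>
    intro r m hm
    rw [suppChain_zero] at hm
    simp only [List.mem_singleton] at hm; omega
  | succ f ih =>
    intro r m hm
    rw [suppChain_succ] at hm
    split at hm
    case isTrue h =>
      rcases List.mem_cons.mp hm with h1 | h1
      · omega
      · have h2 := ih _ _ h1
        have hne : {s | r < s ∧ a r < a s ∧ a s ≤ c - 1}.Nonempty := h
        have h3 := (Nat.sInf_mem hne).1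
        omega
    case isFalse h =>
      simp only [List.mem_singleton] at hm; omega

lemma suppChain_mem_cases (a : ℕ → ℕ) (k c r : ℕ) (hr : KAddable a k c r) :
    ∀ fal m, m ∈ suppChain a c fal r → m = r ∨ k < m := by
  intro fal m hm
  cases fal with
  | zero =>
    rw [suppChain_zero] at hm
    simp only [List.mem_singleton] at hm; left; exact hm
  | succ f =>
    rw [suppChain_succ] at hm
    split at hm
    case isTrue h =>
      rcases List.mem_cons.mp hm with h1 | h1
      · left; exact h1
      · right
        have hne : {s | r < s ∧ a r < a s ∧ a s ≤ c - 1}.Nonempty := h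
        have hmem := Nat.sInf_mem hne
        obtain ⟨hm1, hm2, hm3⟩ := hmem
        have hge := suppChain_mem_ge a c f _ _ h1
        by_contra hk
        push_neg at hk
        have hik : sInf {s | r < s ∧ a r < a s ∧ a s ≤ c - 1} ≤ k := by omega
        have hc : 1 ≤ c := hr.1
        rcases hr.2.2.2.2.2 _ hm1 hik with h6 | h6 <;> omega
    case isFalse h =>
      simp only [List.mem_singleton] at hm; left; exact hm

lemma suppChain_last (a : ℕ → ℕ) (c : ℕ) : ∀ fal r,
    a r ≤ c - 1 → (a r < c - 1 → ∃ l, r < l ∧ a l = c - 1) → c - 1 ≤ a r + fal →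
    ∃ m, (suppChain a c fal r).getLast? = some m ∧ a m = c - 1 := by
  intro fal
  induction fal with
  | zero =>
    intro r h1 h2 h3
    refine ⟨r, ?_, by omega⟩
    rw [suppChain_zero, List.getLast?_singleton]
  | succ f ih =>
    intro r h1 h2 h3
    rw [suppChain_succ]
    by_cases hc : a r = c - 1
    · rw [if_neg]
      · exact ⟨r, List.getLast?_singleton, hc⟩
      · rintro ⟨s, hs1, hs2, hs3⟩; omega
    · have har : a r < c - 1 := by omega
      obtain ⟨l, hl1, hl2⟩ := h2 har
      have hne : ∃ s, r < s ∧ a r < a s ∧ a s ≤ c - 1 := ⟨l, hl1, by omega, by omega⟩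
      rw [if_pos hne]
      have hne' : {s | r < s ∧ a r < a s ∧ a s ≤ c - 1}.Nonempty := hne
      obtain ⟨hm1, hm2, hm3⟩ : r < sInf {s | r < s ∧ a r < a s ∧ a s ≤ c - 1} ∧
          a r < a (sInf {s | r < s ∧ a r < a s ∧ a s ≤ c - 1}) ∧
          a (sInf {s | r < s ∧ a r < a s ∧ a s ≤ c - 1}) ≤ c - 1 := Nat.sInf_mem hne'
      have hinv : a (sInf {s | r < s ∧ a r < a s ∧ a s ≤ c - 1}) < c - 1 →
          ∃ l', sInf {s | r < s ∧ a r < a s ∧ a s ≤ c - 1} < l' ∧ a l' = c - 1 := by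
        intro h
        refine ⟨l, ?_, hl2⟩
        have hle : sInf {s | r < s ∧ a r < a s ∧ a s ≤ c - 1} ≤ l :=
          Nat.sInf_le ⟨hl1, by omega, by omega⟩
        have : sInf {s | r < s ∧ a r < a s ∧ a s ≤ c - 1} ≠ l := by
          intro he; rw [he] at h; omega
        omega
      obtain ⟨m, hgl, hmv⟩ := ih _ hm3 hinv (by omega)
      refine ⟨m, ?_, hmv⟩
      obtain ⟨L, hL⟩ := suppChain_cons a c f (sInf {s | r < s ∧ a r < a s ∧ a s ≤ c - 1})
      rw [hL] at hgl ⊢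
      rw [List.getLast?_cons_cons]
      exact hgl

lemma suppComp_apply_self (a : ℕ → ℕ) (k c r : ℕ) (hr : KAddable a k c r) :
    suppComp a c r r = c - 1 := by
  obtain ⟨hc, hr1, hrk, harc, hex, _⟩ := hr
  obtain ⟨m, hm1, hm2⟩ := suppChain_last a c c r (by omega)
    (fun h => by obtain ⟨l, hl1, hl2⟩ := hex h; exact ⟨l, by omega, hl2⟩) (by omega)
  obtain ⟨L, hL⟩ := suppChain_cons a c c r
  unfold suppComp
  rw [hL] at hm1 ⊢
  rw [applyTrans_cons_head a L r m hm1]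
  exact hm2

lemma suppComp_apply_other (a : ℕ → ℕ) (k c r : ℕ) (hr : KAddable a k c r)
    (i : ℕ) (hik : i ≤ k) (hir : i ≠ r) : suppComp a c r i = a i := by
  unfold suppComp
  apply applyTrans_not_mem
  intro hmem
  rcases suppChain_mem_cases a k c r hr c i hmem with h | h
  · exact hir h
  · omega

/-- Number of entries `≥ t` among positions `1, …, p`. -/
noncomputable def Ncount (b : ℕ → ℕ) (t p : ℕ) : ℕ :=
  ∑ m ∈ Finset.Icc 1 p, if t ≤ b m then 1 else 0

lemma ncount_step (a b : ℕ → ℕ) (h : LSwapStep a b) (t p : ℕ) :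
    Ncount a t p ≤ Ncount b t p := by
  obtain ⟨i, j, hi, hij, hlt, rfl⟩ := h
  by_cases hp : j ≤ p
  · have heq : Ncount (swapParts a i j) t p = Ncount a t p := by
      unfold Ncount
      refine Finset.sum_equiv (Equiv.swap i j) ?_ ?_
      · intro m
        simp only [Finset.mem_Icc, Equiv.swap_apply_def]
        split_ifs <;> omega
      · intro m _
        rw [swapParts_eq_swap]
    omega
  · apply Finset.sum_le_sum
    intro m hm
    simp only [Finset.mem_Icc] at hm
    have hmj : m ≠ j := by omega
    by_cases hmi : m = i
    · subst hmi
      simp only [swapParts, if_pos rfl]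
      split_ifs <;> omega
    · have hb : swapParts a i j m = a m := by
        rw [swapParts]; simp only [if_neg hmi, if_neg hmj]
      rw [hb]

lemma ncount_mono {b a : ℕ → ℕ} (h : LswapLE b a) (t p : ℕ) :
    Ncount a t p ≤ Ncount b t p := by
  unfold LswapLE at h
  induction h with
  | refl => exact le_refl _
  | tail _ h2 ih => exact le_trans ih (ncount_step _ _ h2 t p)

lemma ncount_update (f g : ℕ → ℕ) (t p q : ℕ) (hq1 : 1 ≤ q) (hqp : q ≤ p)
    (h : ∀ m, 1 ≤ m → m ≤ p → m ≠ q → f m = g m) :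
    Ncount f t p + (if t ≤ g q then 1 else 0)
      = Ncount g t p + (if t ≤ f q then 1 else 0) := by
  unfold Ncount
  have hq : q ∈ Finset.Icc 1 p := Finset.mem_Icc.mpr ⟨hq1, hqp⟩
  rw [← Finset.sum_erase_add _ _ hq,
    ← Finset.sum_erase_add _ (fun m => if t ≤ g m then 1 else 0) hq]
  have heq : ∑ m ∈ (Finset.Icc 1 p).erase q, (if t ≤ f m then 1 else 0) =
      ∑ m ∈ (Finset.Icc 1 p).erase q, (if t ≤ g m then 1 else 0) := by
    apply Finset.sum_congr rfl
    intro m hm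
    have h1 := Finset.mem_erase.mp hm
    have h2 := Finset.mem_Icc.mp h1.2
    rw [h m h2.1 h2.2 h1.1]
  omega

end Statement5Aux

/-- Two `k`-addable cells in the same column yield incomparable
support compositions. -/
theorem statement5 (n : ℕ) (a : ℕ → ℕ) (ha : ∀ i, n < i → a i = 0)
    (k c r s : ℕ) (hr : KAddable a k c r) (hs : KAddable a k c s) (hrs : r < s) :
    a s < a r ∧
      ¬ LswapLE (suppComp a c r + eComp r) (suppComp a c s + eComp s) ∧
      ¬ LswapLE (suppComp a c s + eComp s) (suppComp a c r + eComp r) := by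
  have hc : 1 ≤ c := hr.1
  have hr1 : 1 ≤ r := hr.2.1
  have hrk : r ≤ k := hr.2.2.1
  have harc : a r < c := hr.2.2.2.1
  have hs1 : 1 ≤ s := hs.2.1
  have hsk : s ≤ k := hs.2.2.1
  have hasc : a s < c := hs.2.2.2.1
  have hsr : a s < a r := by
    rcases hr.2.2.2.2.2 s hrs hsk with h | h
    · exact h
    · omega
  set u := suppComp a c r + eComp r with hu
  set v := suppComp a c s + eComp s with hv
  have hur : u r = c := by
    have h1 := suppComp_apply_self a k c r hr
    have : u r = suppComp a c r r + eComp r r := rfl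
    have he : eComp r r = 1 := by simp [eComp]
    rw [this, h1, he]
    omega
  have hvs : v s = c := by
    have h1 := suppComp_apply_self a k c s hs
    have : v s = suppComp a c s s + eComp s s := rfl
    have he : eComp s s = 1 := by simp [eComp]
    rw [this, h1, he]
    omega
  have huo : ∀ m, 1 ≤ m → m ≤ s → m ≠ r → u m = a m := by
    intro m h1 h2 h3
    have h4 : suppComp a c r m = a m :=
      suppComp_apply_other a k c r hr m (by omega) h3
    have : u m = suppComp a c r m + eComp r m := rfl
    have he : eComp r m = 0 := by simp [eComp, h3]
    rw [this, h4, he]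
    omega
  have hvo : ∀ m, 1 ≤ m → m < s → v m = a m := by
    intro m h1 h2
    have h3 : m ≠ s := by omega
    have h4 : suppComp a c s m = a m :=
      suppComp_apply_other a k c s hs m (by omega) h3
    have : v m = suppComp a c s m + eComp s m := rfl
    have he : eComp s m = 0 := by simp [eComp, h3]
    rw [this, h4, he]
    omega
  have hA : Ncount v c r < Ncount u c r := by
    have e1 := ncount_update u a c r r hr1 le_rfl
      (fun m h1 h2 h3 => huo m h1 (by omega) h3)
    have e2 : Ncount v c r = Ncount a c r := by
      unfold Ncount
      apply Finset.sum_congr rfl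
      intro m hm
      have h2 := Finset.mem_Icc.mp hm
      rw [hvo m h2.1 (by omega)]
    rw [hur] at e1
    split_ifs at e1 <;> omega
  have hB : Ncount u (a r) s < Ncount v (a r) s := by
    have e1 := ncount_update u a (a r) s r hr1 (by omega) huo
    have e2 := ncount_update v a (a r) s s hs1 le_rfl
      (fun m h1 h2 h3 => hvo m h1 (by omega))
    rw [hur] at e1
    rw [hvs] at e2
    split_ifs at e1 e2 <;> omega
  refine ⟨hsr, ?_, ?_⟩
  · intro h
    have := ncount_mono h (a r) s
    omega
  · intro h
    have := ncount_mono h c r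
    omega
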